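/- Let (x̃,ỹ) ∈ ℝ² and (u,v) ∈ ℝ², and let N = x̃² + ỹ² + 1. Define q = (x̃,ỹ,−1)/√N ∈ S_SH and (x',y',z') = ( ((ỹ²+1)u − x̃ỹv)/N^{3/2}, (−x̃ỹu + (x̃²+1)v)/N^{3/2}, (x̃u + ỹv)/N^{3/2} ), the pushforward of (u,v) under the central projection. Then ⟨(x',y',z'), q⟩ = 0 and x'² + y'² + z'² = [(1+ỹ²)u² − 2x̃ỹuv + (1+x̃²)v²]/N² = [u² + v² + (uỹ − x̃v)²]/N². In particular, the spherical kinetic energy in the gnomonic chart, after the time change dt/dτ = N, equals (u² + v² + (uỹ − x̃v)²)/2, the sum of the planar kinetic energy and half the squared angular momentum. -/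

import Mathlib

noncomputable section

/-- The Euclidean dot product on `ℝ³ = ℝ × ℝ × ℝ`. -/
def dot3 (u v : ℝ × ℝ × ℝ) : ℝ := u.1 * v.1 + u.2.1 * v.2.1 + u.2.2 * v.2.2

/-- The pushforward of a planar velocity `(u,v)` under the central projection is
tangent to the sphere, and its squared length equals the spherical kinetic
quadratic form in the gnomonic chart, which is the sum of the planar kinetic
form and the squared angular momentum, divided by `N²`. -/
theorem pushforward_central_projection_kinetic_energy
    (xt yt u v N : ℝ) (hN : N = xt ^ 2 + yt ^ 2 + 1)
    (q : ℝ × ℝ × ℝ) (hq : q = (Real.sqrt N)⁻¹ • (xt, yt, (-1 : ℝ)))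
    (x' y' z' : ℝ)
    (hx' : x' = ((yt ^ 2 + 1) * u - xt * yt * v) / N ^ ((3 : ℝ) / 2))
    (hy' : y' = (-(xt * yt) * u + (xt ^ 2 + 1) * v) / N ^ ((3 : ℝ) / 2))
    (hz' : z' = (xt * u + yt * v) / N ^ ((3 : ℝ) / 2)) :
    dot3 (x', y', z') q = 0
      ∧ x' ^ 2 + y' ^ 2 + z' ^ 2
          = ((1 + yt ^ 2) * u ^ 2 - 2 * xt * yt * u * v + (1 + xt ^ 2) * v ^ 2) / N ^ 2
      ∧ ((1 + yt ^ 2) * u ^ 2 - 2 * xt * yt * u * v + (1 + xt ^ 2) * v ^ 2) / N ^ 2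
          = (u ^ 2 + v ^ 2 + (u * yt - xt * v) ^ 2) / N ^ 2 := by
  have hNpos : (0 : ℝ) < N := by nlinarith [sq_nonneg xt, sq_nonneg yt]
  set s := Real.sqrt N with hs
  have hspos : 0 < s := Real.sqrt_pos.mpr hNpos
  have hs2 : s ^ 2 = N := Real.sq_sqrt hNpos.le
  have h32 : N ^ ((3 : ℝ) / 2) = N * s := by
    have : ((3 : ℝ) / 2) = 1 + 1 / 2 := by norm_num
    rw [this, Real.rpow_add hNpos, Real.rpow_one, hs, Real.sqrt_eq_rpow]
  refine ⟨?_, ?_, ?_⟩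
  · simp only [dot3, hq, hx', hy', hz', h32, Prod.smul_fst, Prod.smul_snd, smul_eq_mul]
    field_simp
    nlinarith [hs2]
  · rw [hx', hy', hz', h32]
    have h3 : (N * s) ^ 2 = N ^ 3 := by rw [mul_pow, hs2]; ring
    field_simp
    rw [hs2, hN]; ring
  · rw [hN]; ring_nf
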